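/- arXiv:1810.03485 — 2 statements merged into one kernel-verified Lean document; each statement's English description precedes it below -/
import Mathlib

section
/- Let q be a prime power and k, d positive integers with gcd(d+1, q^k − 1) = 1. Set n = (q^{k(d+1)} − 1)/(q^k − 1). Then h_q(n) = kd. -/
open Polynomial Module

/-- The cyclic shift operator on `Fin n → F`. -/
def cycShift (F : Type*) (n : ℕ) : (Fin n → F) → (Fin n → F) :=
  fun x i => x ⟨(i.1 + 1) % n, Nat.mod_lt _ (lt_of_le_of_lt (Nat.zero_le _) i.2)⟩

/-- A subspace `U ≤ F^n` is cyclically covering if the union of its cyclic shifts is `F^n`. -/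
def IsCycCovering (F : Type*) [Field F] (n : ℕ) (U : Submodule F (Fin n → F)) : Prop :=
  ∀ x : Fin n → F, ∃ r : ℕ, (cycShift F n)^[r] x ∈ U

lemma cycShift_iterate (F : Type*) (n : ℕ) (r : ℕ) (x : Fin n → F) (i : Fin n) :
    (cycShift F n)^[r] x i = x ⟨(i.1 + r) % n, Nat.mod_lt _ (lt_of_le_of_lt (Nat.zero_le _) i.2)⟩ := by
  induction r generalizing x with
  | zero => simp [Nat.mod_eq_of_lt i.2]
  | succ r ih =>
    rw [Function.iterate_succ_apply, ih (cycShift F n x)]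
    simp only [cycShift]
    congr 1
    have hn : 0 < n := lt_of_le_of_lt (Nat.zero_le _) i.2
    ext
    simp only []
    rw [← add_assoc]
    conv_lhs => rw [Nat.add_mod]
    conv_rhs => rw [Nat.add_mod]
    simp [Nat.mod_mod]

lemma cycShift_iterate_n (F : Type*) (n : ℕ) (x : Fin n → F) :
    (cycShift F n)^[n] x = x := by
  funext i
  rw [cycShift_iterate]
  congr 1
  ext
  simp [Nat.add_mod_right, Nat.mod_eq_of_lt i.2]

lemma card_galois_ext (F : Type*) [Field F] [Fintype F] (M : ℕ) (hM : M ≠ 0) :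
    Nat.card (SplittingField (X ^ (Fintype.card F ^ M) - X : F[X])) = Fintype.card F ^ M := by
  classical
  set q := Fintype.card F with hq
  set gp : F[X] := X ^ q ^ M - X with hgp
  set E := SplittingField gp with hE
  obtain ⟨s, hp, hqs⟩ := FiniteField.card F (ringChar F)
  haveI : Fact (Nat.Prime (ringChar F)) := ⟨hp⟩
  haveI : CharP E (ringChar F) :=
    charP_of_injective_algebraMap (algebraMap F E).injective _
  have hq1 : 1 < q := Fintype.one_lt_card
  have hpq : ringChar F ∣ q ^ M :=
    dvd_pow (by rw [hq, hqs]; exact dvd_pow_self _ (by exact_mod_cast s.ne_zero)) hM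
  have hsep : gp.Separable := galois_poly_separable (ringChar F) (q ^ M) hpq
  have hdeg : gp.natDegree = q ^ M :=
    FiniteField.X_pow_card_pow_sub_X_natDegree_eq F hM hq1
  have aux : gp ≠ 0 := FiniteField.X_pow_card_pow_sub_X_ne_zero F hM hq1
  have key : Fintype.card (gp.rootSet E) = q ^ M := by
    rw [card_rootSet_eq_natDegree hsep (SplittingField.splits gp), hdeg]
  have hfrob : ∀ x y : E, (x + y) ^ q ^ M = x ^ q ^ M + y ^ q ^ M := by
    intro x y
    rw [hq, hqs, ← pow_mul]
    exact add_pow_char_pow x y (ringChar F) (s * M)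
  have hneg1 : (-1 : E) ^ q ^ M = -1 := by
    rw [hq, hqs, ← pow_mul]
    exact neg_one_pow_char_pow E (ringChar F) (s * M)
  haveI : FiniteDimensional F E := by dsimp only [E]; infer_instance
  haveI : Finite E := Module.finite_of_finite F
  haveI : Fintype E := Fintype.ofFinite E
  suffices huniv : gp.rootSet E = Set.univ by
    rw [Nat.card_eq_fintype_card, ← key]
    exact (Fintype.card_congr ((Equiv.setCongr huniv).trans (Equiv.Set.univ E))).symm
  rw [Set.eq_univ_iff_forall]
  suffices h : ∀ (x) (_ : x ∈ (⊤ : Subalgebra F E)), x ∈ gp.rootSet E by simpa using h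
  rw [← SplittingField.adjoin_rootSet]
  simp_rw [Algebra.mem_adjoin_iff]
  intro x hx
  refine Subring.closure_induction ?_ ?_ ?_ ?_ ?_ ?_ hx <;> simp_rw [mem_rootSet_of_ne aux]
  · rintro x (⟨r, rfl⟩ | hx)
    · simp only [hgp, map_sub, map_pow, aeval_X]
      rw [← map_pow, FiniteField.pow_card_pow, sub_self]
    · rwa [mem_rootSet_of_ne aux] at hx
  · simp [hgp, zero_pow (pow_ne_zero M (by omega : q ≠ 0))]
  · simp [hgp]
  · simp only [hgp, aeval_X_pow, aeval_X, map_sub, sub_eq_zero]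
    intro x y _ _ hx hy
    rw [hfrob, hx, hy]
  · intro x _ hx
    simp only [hgp, sub_eq_zero, aeval_X_pow, aeval_X, map_sub] at *
    rw [neg_pow, hneg1, hx]
    ring
  · simp only [hgp, aeval_X_pow, aeval_X, map_sub, mul_pow, sub_eq_zero]
    intro x y _ _ hx hy
    rw [hx, hy]

lemma cycShift_iterate_mod (F : Type*) {n : ℕ} (hn : 0 < n) (r : ℕ) (x : Fin n → F) :
    (cycShift F n)^[r] x = (cycShift F n)^[r % n] x := by
  funext i
  rw [cycShift_iterate, cycShift_iterate]
  congr 1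
  ext
  simp [Nat.add_mod_mod]

lemma covering_card_le {F : Type*} [Field F] [Fintype F] {n : ℕ} (hn : 0 < n)
    {U : Submodule F (Fin n → F)} (hU : IsCycCovering F n U) :
    Fintype.card F ^ (n - Module.finrank F U) ≤ n := by
  classical
  have hsurj : Function.Surjective
      (fun p : Fin n × U => (cycShift F n)^[p.1.1] p.2.1) := by
    intro x
    obtain ⟨r, hr⟩ := hU x
    rw [cycShift_iterate_mod F hn] at hr
    set r0 := r % n with hr0
    have hr0n : r0 < n := Nat.mod_lt _ hn
    by_cases h0 : r0 = 0
    · exact ⟨⟨⟨0, hn⟩, ⟨_, hr⟩⟩, by simp [h0] at hr ⊢⟩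
    · refine ⟨⟨⟨n - r0, by omega⟩, ⟨_, hr⟩⟩, ?_⟩
      simp only
      rw [← Function.iterate_add_apply]
      have : n - r0 + r0 = n := by omega
      rw [this, cycShift_iterate_n]
  have hcard : Nat.card (Fin n → F) ≤ Nat.card (Fin n × U) :=
    Nat.card_le_card_of_surjective _ hsurj
  rw [Nat.card_eq_fintype_card, Nat.card_eq_fintype_card, Fintype.card_prod,
    Fintype.card_pi, Fintype.card_fin] at hcard
  simp only [Finset.prod_const, Finset.card_univ, Fintype.card_fin] at hcard
  have hUcard : Fintype.card U = Fintype.card F ^ Module.finrank F U := card_eq_pow_finrank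
  rw [hUcard] at hcard
  have hle : Module.finrank F U ≤ n := by
    have := Submodule.finrank_le U
    rwa [Module.finrank_pi, Fintype.card_fin] at this
  have hsplit : Fintype.card F ^ n
      = Fintype.card F ^ (n - Module.finrank F U) * Fintype.card F ^ Module.finrank F U := by
    rw [← pow_add]; congr 1; omega
  rw [hsplit] at hcard
  exact Nat.le_of_mul_le_mul_right hcard (pow_pos Fintype.card_pos _)

set_option maxHeartbeats 1000000 in
set_option synthInstance.maxHeartbeats 400000 in
open scoped IntermediateField in
lemma construction {F : Type*} [Field F] [Fintype F] (k d n : ℕ) (hk : 0 < k) (hd : 0 < d)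
    (hgcd : Nat.gcd (d + 1) (Fintype.card F ^ k - 1) = 1)
    (hn : n = ∑ r ∈ Finset.range (d + 1), Fintype.card F ^ (k * r)) :
    ∃ U : Submodule F (Fin n → F), IsCycCovering F n U ∧
      Module.finrank F (Fin n → F) - Module.finrank F U = k * d := by
  classical
  set q := Fintype.card F with hq
  have hq1 : 1 < q := Fintype.one_lt_card
  set m := k * (d + 1) with hm
  have hm0 : m ≠ 0 := by positivity
  have hqk2 : 2 ≤ q ^ k := Nat.one_lt_pow (by omega) hq1
  set D := q ^ k - 1 with hD
  have hD1 : 1 ≤ D := by omega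
  have hqk1 : 1 ≤ q ^ k := by omega
  have hqm1 : 1 ≤ q ^ m := Nat.one_le_pow _ _ (by omega)
  have hZn : (n:ℤ) = ∑ i ∈ Finset.range (d+1), ((q:ℤ)^k)^i := by
    rw [hn]; push_cast; exact Finset.sum_congr rfl (fun r _ => by rw [← pow_mul])
  have hN : n * D = q ^ m - 1 := by
    have h2 : ((q:ℤ)^k) ^ (d+1) = (q:ℤ)^m := by rw [← pow_mul, hm]
    have h3 : (n:ℤ) * ((q:ℤ)^k - 1) = (q:ℤ)^m - 1 := by rw [hZn, geom_sum_mul, h2]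
    have h4 : ((n * D : ℕ):ℤ) = ((q^m - 1 : ℕ):ℤ) := by
      rw [Nat.cast_mul, hD, Nat.cast_sub hqk1, Nat.cast_sub hqm1]; push_cast; exact h3
    exact_mod_cast h4
  have hqkd_le : q ^ (k * d) ≤ n := by
    rw [hn]
    exact Finset.single_le_sum (f := fun r => q ^ (k * r)) (fun i _ => Nat.zero_le _)
      (Finset.self_mem_range_succ d)
  have h2kd : k * d + k ≤ 2 ^ (k * d) := by
    have h1 : 1 ≤ k * d := Nat.one_le_iff_ne_zero.mpr (by positivity)
    have h2 : k * d ≤ 2 ^ (k * d - 1) := by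
      have := Nat.lt_two_pow_self (n := k * d - 1)
      omega
    have h3 : 2 ^ (k * d) = 2 ^ (k * d - 1) * 2 := by
      conv_lhs => rw [show k * d = (k * d - 1) + 1 by omega]
      exact pow_succ 2 _
    have hkkd : k ≤ k * d := Nat.le_mul_of_pos_right k hd
    omega
  have hmn : m ≤ n := by
    have : (2:ℕ) ^ (k * d) ≤ q ^ (k * d) := Nat.pow_le_pow_left (by omega) _
    have hmm : m = k * d + k := by rw [hm]; ring
    omega
  have hn_pos : 0 < n := by omega
  -- coprimality of n and D
  have hcop : Nat.Coprime n D := by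
    have hmod : n % D = (d + 1) % D := by
      have hqk : q ^ k % D = 1 % D := by
        conv_lhs => rw [show q ^ k = D + 1 by omega]
        exact Nat.add_mod_left D 1
      have hterm : ∀ r, q ^ (k * r) % D = 1 % D := by
        intro r
        have : q ^ (k * r) = (q ^ k) ^ r := by rw [← pow_mul]
        rw [this]
        calc (q ^ k) ^ r % D = (q ^ k % D) ^ r % D := by rw [Nat.pow_mod]
          _ = (1 % D) ^ r % D := by rw [hqk]
          _ = 1 ^ r % D := by rw [← Nat.pow_mod]
          _ = 1 % D := by rw [one_pow]
      calc n % D = (∑ r ∈ Finset.range (d+1), q ^ (k * r)) % D := by rw [hn]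
        _ = (∑ r ∈ Finset.range (d+1), q ^ (k * r) % D) % D := Finset.sum_nat_mod _ _ _
        _ = (∑ _r ∈ Finset.range (d+1), 1 % D) % D := by
              rw [Finset.sum_congr rfl (fun r _ => hterm r)]
        _ = (∑ _r ∈ Finset.range (d+1), (1:ℕ)) % D := by rw [← Finset.sum_nat_mod]
        _ = (d + 1) % D := by rw [Finset.sum_const, Finset.card_range, smul_eq_mul, mul_one]
    have hg : Nat.gcd n D = Nat.gcd (d+1) D := by
      rw [Nat.gcd_comm n D, Nat.gcd_comm (d+1) D, Nat.gcd_rec D n, Nat.gcd_rec D (d+1), hmod]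
    unfold Nat.Coprime
    rw [hg]
    exact hgcd
  -- the field extension E with q^m elements
  set E := Polynomial.SplittingField (X ^ (q ^ m) - X : F[X]) with hE
  haveI : FiniteDimensional F E :=
    inferInstanceAs (FiniteDimensional F (Polynomial.SplittingField (X ^ (q ^ m) - X : F[X])))
  haveI : Finite E := Module.finite_of_finite F
  haveI : Fintype E := Fintype.ofFinite E
  have hcardE : Fintype.card E = q ^ m := by
    have := card_galois_ext F m hm0
    rwa [Nat.card_eq_fintype_card] at this
  have hfrE : Module.finrank F E = m := by
    have h1 : Fintype.card E = q ^ Module.finrank F E := card_eq_pow_finrank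
    exact Nat.pow_right_injective hq1 (h1.symm.trans hcardE)
  -- the generator and the element b of order n
  obtain ⟨ζ, hζ⟩ := IsCyclic.exists_generator (α := Eˣ)
  have hordζ : orderOf ζ = q ^ m - 1 := by
    rw [orderOf_eq_card_of_forall_mem_zpowers hζ, Nat.card_eq_fintype_card,
      Fintype.card_units, hcardE]
  set β := ζ ^ D with hβ
  have hordβ : orderOf β = n := by
    rw [hβ, orderOf_pow, hordζ, ← hN, Nat.gcd_comm,
      Nat.gcd_eq_left ⟨n, mul_comm n D⟩]
    exact Nat.mul_div_cancel n (show 0 < D by omega)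
  have hordζn : orderOf (ζ ^ n) = D := by
    rw [orderOf_pow, hordζ, ← hN, Nat.gcd_comm, Nat.gcd_eq_left ⟨D, rfl⟩,
      Nat.mul_div_cancel_left D hn_pos]
  set b : E := ((β : Eˣ) : E) with hb
  have hb_ne : b ≠ 0 := Units.ne_zero β
  have hbn : b ^ n = 1 := by
    rw [hb, ← Units.val_pow_eq_pow_val, ← hordβ, pow_orderOf_eq_one, Units.val_one]
  have hbi : ∀ i : ℕ, b ^ i = b ^ (i % n) := by
    intro i
    conv_lhs => rw [← Nat.div_add_mod i n]
    simp only [pow_add, pow_mul, hbn, one_pow, one_mul]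
  -- the linear map
  set hmap : (Fin n → F) →ₗ[F] E :=
    { toFun := fun f => ∑ i : Fin n, f i • b ^ (i : ℕ)
      map_add' := by intro f g; simp [add_smul, Finset.sum_add_distrib]
      map_smul' := by intro c f; simp [mul_smul, Finset.smul_sum] } with hhmap
  have hmap_apply : ∀ f, hmap f = ∑ i : Fin n, f i • b ^ (i : ℕ) := fun f => rfl
  -- the rotation equivalence
  have hrot : ∀ f : Fin n → F, hmap (cycShift F n f) * b = hmap f := by
    intro f
    rw [hmap_apply, hmap_apply, Finset.sum_mul]
    have key : ∀ i : Fin n,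
        (cycShift F n f) i • b ^ (i : ℕ) * b
          = f ⟨((i:ℕ) + 1) % n, Nat.mod_lt _ hn_pos⟩ • b ^ (((i:ℕ) + 1) % n) := by
      intro i
      rw [smul_mul_assoc, ← pow_succ, hbi ((i:ℕ)+1)]
      rfl
    rw [Finset.sum_congr rfl (fun i _ => key i)]
    let e : Fin n ≃ Fin n :=
      { toFun := fun i => ⟨((i:ℕ) + 1) % n, Nat.mod_lt _ hn_pos⟩
        invFun := fun j => ⟨((j:ℕ) + (n - 1)) % n, Nat.mod_lt _ hn_pos⟩
        left_inv := by
          intro i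
          ext
          simp only [Nat.mod_add_mod]
          rw [show (i:ℕ) + 1 + (n - 1) = (i:ℕ) + n by omega, Nat.add_mod_right,
            Nat.mod_eq_of_lt i.2]
        right_inv := by
          intro j
          ext
          simp only [Nat.mod_add_mod]
          rw [show (j:ℕ) + (n - 1) + 1 = (j:ℕ) + n by omega, Nat.add_mod_right,
            Nat.mod_eq_of_lt j.2] }
    exact Fintype.sum_equiv e _ _ (fun i => rfl)
  have hrotIter : ∀ (r : ℕ) (f : Fin n → F),
      hmap ((cycShift F n)^[r] f) * b ^ r = hmap f := by
    intro r
    induction r with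
    | zero => intro f; simp
    | succ r ih =>
      intro f
      rw [Function.iterate_succ_apply', pow_succ, ← mul_assoc,
        mul_right_comm, hrot, ih]
  -- characteristic facts
  obtain ⟨sP, hpP, hqsP⟩ := FiniteField.card F (ringChar F)
  haveI : Fact (Nat.Prime (ringChar F)) := ⟨hpP⟩
  haveI : CharP E (ringChar F) := charP_of_injective_algebraMap (algebraMap F E).injective _
  have hqports : q ^ k = ringChar F ^ ((sP : ℕ) * k) := by rw [hq, hqsP, ← pow_mul]
  have hfrobk : ∀ x y : E, (x + y) ^ q ^ k = x ^ q ^ k + y ^ q ^ k := by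
    intro x y
    rw [hqports]
    exact add_pow_char_pow x y (ringChar F) _
  -- the subfield F_{q^k} as an F-submodule
  set Ksub : Submodule F E :=
    { carrier := {x : E | x ^ q ^ k = x}
      add_mem' := by
        intro a b ha hb
        have ha' : a ^ q ^ k = a := ha
        have hb' : b ^ q ^ k = b := hb
        show (a + b) ^ q ^ k = a + b
        rw [hfrobk, ha', hb']
      zero_mem' := by
        show (0 : E) ^ q ^ k = 0
        exact zero_pow (by positivity)
      smul_mem' := by
        intro c x hx
        have hx' : x ^ q ^ k = x := hx
        show (c • x) ^ q ^ k = c • x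
        rw [_root_.smul_pow, hx']
        congr 1
        exact FiniteField.pow_card_pow k c } with hKsub
  have hKdef : ∀ x : E, x ∈ Ksub ↔ x ^ q ^ k = x := fun x => Iff.rfl
  have hDq : D + 1 = q ^ k := by omega
  have hKmem : ∀ w : Eˣ, w ^ D = 1 → ((w : E) ∈ Ksub) := by
    intro w hw
    have h1 : (w : E) ^ D = 1 := by rw [← Units.val_pow_eq_pow_val, hw, Units.val_one]
    have h2 : ((w : E)) ^ (q ^ k) = (w : E) := by
      rw [← hDq, pow_succ, h1, one_mul]
    exact (hKdef _).mpr h2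
  -- cardinality of Ksub
  have hgD : (ζ ^ n) ^ D = 1 := by rw [← hordζn]; exact pow_orderOf_eq_one _
  have hKcard : Fintype.card Ksub = q ^ k := by
    set P : E[X] := X ^ q ^ k - X with hP
    have hq1k : 1 < q ^ k := by omega
    have hP0 : P ≠ 0 := FiniteField.X_pow_card_sub_X_ne_zero E hq1k
    have hPdeg : P.natDegree = q ^ k := FiniteField.X_pow_card_sub_X_natDegree_eq E hq1k
    have hmemroots : ∀ x : Ksub, x.1 ∈ P.roots.toFinset := by
      intro x
      rw [Multiset.mem_toFinset, Polynomial.mem_roots']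
      refine ⟨hP0, ?_⟩
      have hx := (hKdef x.1).mp x.2
      simp only [Polynomial.IsRoot, hP, Polynomial.eval_sub, Polynomial.eval_pow,
        Polynomial.eval_X]
      rw [hx, sub_self]
    have hupper : Fintype.card Ksub ≤ q ^ k := by
      have h1 : Fintype.card Ksub ≤ Fintype.card {y // y ∈ P.roots.toFinset} :=
        Fintype.card_le_of_injective (fun x => ⟨x.1, hmemroots x⟩)
          (fun a b hab => by simp only [Subtype.mk.injEq] at hab; exact Subtype.ext hab)
      rw [Fintype.card_coe] at h1
      have h2 : P.roots.toFinset.card ≤ Multiset.card P.roots :=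
        Multiset.toFinset_card_le _
      have h3 : Multiset.card P.roots ≤ P.natDegree := Polynomial.card_roots' P
      omega
    have hlower : D + 1 ≤ Fintype.card Ksub := by
      have hinj0 : ∀ j1 j2 : Fin D, (((ζ ^ n) ^ (j1:ℕ) : Eˣ) : E) = (((ζ ^ n) ^ (j2:ℕ) : Eˣ) : E)
          → j1 = j2 := by
        intro j1 j2 hj
        have hj' : (ζ ^ n) ^ (j1:ℕ) = (ζ ^ n) ^ (j2:ℕ) := Units.ext hj
        rw [pow_inj_mod, hordζn, Nat.mod_eq_of_lt j1.2, Nat.mod_eq_of_lt j2.2] at hj'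
        exact Fin.ext hj'
      have h0notmem : (0:E) ∉
          Finset.image (fun j : Fin D => (((ζ ^ n) ^ (j:ℕ) : Eˣ) : E)) Finset.univ := by
        simp only [Finset.mem_image, not_exists]
        intro j hj
        exact Units.ne_zero _ hj.2
      have hTcard : (insert (0:E)
          (Finset.image (fun j : Fin D => (((ζ ^ n) ^ (j:ℕ) : Eˣ) : E)) Finset.univ)).card
          = D + 1 := by
        rw [Finset.card_insert_of_notMem h0notmem,
          Finset.card_image_of_injective _ (fun j1 j2 hj => hinj0 j1 j2 hj),
          Finset.card_univ, Fintype.card_fin]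
      have hTmem : ∀ x ∈ insert (0:E)
          (Finset.image (fun j : Fin D => (((ζ ^ n) ^ (j:ℕ) : Eˣ) : E)) Finset.univ),
          x ∈ Ksub := by
        intro x hx
        rcases Finset.mem_insert.mp hx with rfl | hx
        · exact Ksub.zero_mem
        · obtain ⟨j, _, rfl⟩ := Finset.mem_image.mp hx
          apply hKmem
          rw [pow_right_comm, hgD, one_pow]
      calc D + 1 = _ := hTcard.symm
        _ = Fintype.card {x // x ∈ insert (0:E)
            (Finset.image (fun j : Fin D => (((ζ ^ n) ^ (j:ℕ) : Eˣ) : E)) Finset.univ)} :=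
          (Fintype.card_coe _).symm
        _ ≤ Fintype.card Ksub :=
          Fintype.card_le_of_injective (fun x => (⟨x.1, hTmem x.1 x.2⟩ : Ksub))
            (fun a b hab => by simp only [Subtype.mk.injEq] at hab; exact Subtype.ext hab)
    omega
  have hfrK : Module.finrank F Ksub = k := by
    have h1 : Fintype.card Ksub = q ^ Module.finrank F Ksub := card_eq_pow_finrank
    exact Nat.pow_right_injective hq1 (h1.symm.trans hKcard)
  -- hmap hits every power of b
  have hsingle : ∀ j : Fin n, hmap (Pi.single j 1) = b ^ (j : ℕ) := by
    intro j
    rw [hmap_apply]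
    have hterm : ∀ i : Fin n, ((Pi.single j (1:F) : Fin n → F) i) • b ^ (i:ℕ)
        = if i = j then b ^ (j:ℕ) else 0 := by
      intro i
      by_cases h : i = j
      · subst h; simp
      · simp [Pi.single_eq_of_ne h, if_neg h]
    rw [Finset.sum_congr rfl (fun i _ => hterm i), Finset.sum_ite_eq' Finset.univ j,
      if_pos (Finset.mem_univ j)]
  have hpow_mem : ∀ i : ℕ, b ^ i ∈ LinearMap.range hmap := by
    intro i
    rw [hbi i]
    exact ⟨Pi.single ⟨i % n, Nat.mod_lt _ hn_pos⟩ 1, hsingle _⟩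
  -- surjectivity of hmap
  have hrange : LinearMap.range hmap = ⊤ := by
    have hbint : IsIntegral F b := IsIntegral.of_finite F b
    haveI : FiniteDimensional F (F⟮b⟯) := inferInstance
    haveI : Finite (F⟮b⟯) := Subtype.finite
    haveI : Fintype (F⟮b⟯) := Fintype.ofFinite _
    set x0 : F⟮b⟯ := ⟨b, IntermediateField.mem_adjoin_simple_self F b⟩ with hx0def
    have hx0 : x0 ≠ 0 := by
      intro h
      exact hb_ne (congrArg Subtype.val h)
    have hordb : orderOf b = n := by rw [hb, orderOf_units, hordβ]
    have hordx0 : orderOf x0 = n := by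
      have h1 := orderOf_injective (F⟮b⟯.val : F⟮b⟯ →ₐ[F] E).toMonoidHom
        (fun a b hab => Subtype.ext hab) x0
      rw [← h1]
      exact hordb
    have hordu0 : orderOf (Units.mk0 x0 hx0) = n := by
      rw [← orderOf_units, Units.val_mk0]
      exact hordx0
    have hdvd : n ∣ Fintype.card (F⟮b⟯) - 1 := by
      classical
      rw [← Fintype.card_units (α := F⟮b⟯), ← hordu0]
      exact orderOf_dvd_card
    have hcardFb : Fintype.card (F⟮b⟯) = q ^ Module.finrank F (F⟮b⟯) := card_eq_pow_finrank
    set t := Module.finrank F (F⟮b⟯) with htdef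
    have htm : t * Module.finrank (F⟮b⟯) E = m := by
      rw [htdef, Module.finrank_mul_finrank F (F⟮b⟯) E, hfrE]
    have ht_pos : 0 < t := Module.finrank_pos
    have hqt1 : 1 ≤ q ^ t := Nat.one_le_pow _ _ (by omega)
    have hdvd' : n ∣ q ^ t - 1 := by rwa [hcardFb] at hdvd
    have ht : t = m := by
      by_contra hne
      set c := Module.finrank (F⟮b⟯) E with hcdef
      have hc0 : c ≠ 0 := by intro h; rw [h, mul_zero] at htm; exact hm0 htm.symm
      have hc1 : c ≠ 1 := by intro h; rw [h, mul_one] at htm; exact hne htm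
      have hc2 : 2 ≤ c := by omega
      have h2t : 2 * t ≤ m := by
        calc 2 * t = t * 2 := mul_comm _ _
          _ ≤ t * c := Nat.mul_le_mul_left t hc2
          _ = m := htm
      have hkkd : k ≤ k * d := Nat.le_mul_of_pos_right k hd
      have hmkd : m = k * d + k := by rw [hm]; ring
      have htkd : t ≤ k * d := by omega
      have hqt : q ^ t ≤ q ^ (k * d) := Nat.pow_le_pow_right (by omega) htkd
      have hlt : q ^ t - 1 < n := by omega
      have hzero := Nat.eq_zero_of_dvd_of_lt hdvd' hlt
      have hqle : q ≤ q ^ t := Nat.le_self_pow (by omega) q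
      omega
    -- span of powers of b is everything
    have hspan_top : Submodule.span F (Set.range fun i : ℕ => b ^ i) = ⊤ := by
      apply Submodule.eq_top_of_finrank_eq
      apply le_antisymm
      · exact Submodule.finrank_le _
      · have hle : Subalgebra.toSubmodule (Algebra.adjoin F {b})
            ≤ Submodule.span F (Set.range fun i : ℕ => b ^ i) := by
          rw [Algebra.adjoin_eq_span]
          apply Submodule.span_mono
          intro x hx
          have hx' : x ∈ Submonoid.closure ({b} : Set E) := hx
          have : Submonoid.closure ({b} : Set E) ≤ Submonoid.powers b :=
            Submonoid.closure_le.mpr (by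
              intro y hy
              rw [Set.mem_singleton_iff] at hy
              subst hy
              exact ⟨1, pow_one b⟩)
          obtain ⟨i, hi⟩ := this hx'
          exact ⟨i, hi⟩
        have hfr1 : Module.finrank F (Subalgebra.toSubmodule (Algebra.adjoin F {b}))
            = Module.finrank F E := by
          rw [← IntermediateField.adjoin_simple_toSubalgebra_of_isAlgebraic hbint.isAlgebraic]
          have : Module.finrank F (Subalgebra.toSubmodule (F⟮b⟯).toSubalgebra)
              = Module.finrank F (F⟮b⟯) := rfl
          rw [this, ← htdef, ht, hfrE]
        calc Module.finrank F E
            = Module.finrank F (Subalgebra.toSubmodule (Algebra.adjoin F {b})) := hfr1.symm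
          _ ≤ Module.finrank F (Submodule.span F (Set.range fun i : ℕ => b ^ i)) :=
            Submodule.finrank_mono hle
    rw [← top_le_iff, ← hspan_top]
    rw [Submodule.span_le]
    rintro x ⟨i, rfl⟩
    exact hpow_mem i
  -- the subspace U and its codimension
  set U : Submodule F (Fin n → F) := Ksub.comap hmap with hUdef
  have hkerle : LinearMap.ker hmap ≤ U := by
    intro x hx
    have hx0 : hmap x = 0 := hx
    show hmap x ∈ Ksub
    rw [hx0]
    exact Ksub.zero_mem
  have hrn : Module.finrank F (LinearMap.range hmap)
      + Module.finrank F (LinearMap.ker hmap) = n := by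
    rw [LinearMap.finrank_range_add_finrank_ker hmap, Module.finrank_pi, Fintype.card_fin]
  have hfrker : Module.finrank F (LinearMap.ker hmap) = n - m := by
    rw [hrange, finrank_top, hfrE] at hrn
    omega
  have hres : ∀ x ∈ U, hmap x ∈ Ksub := fun x hx => hx
  set φ : U →ₗ[F] Ksub := hmap.restrict hres with hφdef
  have hφsurj : Function.Surjective φ := by
    intro w
    have hsur : ∀ y : E, ∃ x, hmap x = y := by
      intro y
      have : y ∈ LinearMap.range hmap := by rw [hrange]; trivial
      exact this
    obtain ⟨x, hx⟩ := hsur w.1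
    have hxU : x ∈ U := by show hmap x ∈ Ksub; rw [hx]; exact w.2
    refine ⟨⟨x, hxU⟩, ?_⟩
    rw [hφdef, LinearMap.restrict_apply]
    exact Subtype.ext hx
  have hφker : Module.finrank F (LinearMap.ker φ) = n - m := by
    rw [hφdef, LinearMap.ker_restrict hres]
    rw [(Submodule.comapSubtypeEquivOfLe hkerle).finrank_eq, hfrker]
  have hφrange : Module.finrank F (LinearMap.range φ) = k := by
    rw [LinearMap.range_eq_top.mpr hφsurj, finrank_top, hfrK]
  have hfrU : Module.finrank F U = (n - m) + k := by
    have h1 := LinearMap.finrank_range_add_finrank_ker φ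
    rw [hφrange, hφker] at h1
    omega
  -- the covering property
  have hcover : IsCycCovering F n U := by
    intro f
    by_cases hf0 : hmap f = 0
    · refine ⟨0, ?_⟩
      show hmap ((cycShift F n)^[0] f) ∈ Ksub
      rw [Function.iterate_zero_apply, hf0]
      exact Ksub.zero_mem
    · set x : Eˣ := Units.mk0 (hmap f) hf0 with hxdef
      obtain ⟨tz, htz⟩ := Subgroup.mem_zpowers_iff.mp (hζ x)
      set A := Nat.gcdA n D with hA
      set B := Nat.gcdB n D with hB
      have hbez : (1:ℤ) = n * A + D * B := by
        have h1 := Nat.gcd_eq_gcd_ab n D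
        rw [hcop] at h1
        exact_mod_cast h1
      set w : Eˣ := (ζ ^ n) ^ (A * tz) with hw
      have hx_eq : x = β ^ (B * tz) * w := by
        rw [hw, hβ]
        rw [← zpow_natCast ζ D, ← zpow_natCast ζ n, ← zpow_mul, ← zpow_mul, ← zpow_add]
        rw [show (D:ℤ) * (B * tz) + (n:ℤ) * (A * tz) = ((n:ℤ) * A + (D:ℤ) * B) * tz by ring]
        rw [← hbez, one_mul]
        exact htz.symm
      have hwD : w ^ D = 1 := by
        have h1 : w ^ D = ((ζ ^ n) ^ (D:ℕ)) ^ (A * tz) := by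
          rw [hw, ← zpow_natCast ((ζ ^ n) ^ (A * tz)) D, ← zpow_mul, mul_comm,
            zpow_mul, zpow_natCast]
        rw [h1, hgD, one_zpow]
      set r : ℕ := ((B * tz) % (n:ℤ)).toNat with hr
      have hn0 : (n:ℤ) ≠ 0 := by exact_mod_cast (by omega : n ≠ 0)
      have hβn1 : β ^ (n:ℤ) = 1 := by
        rw [zpow_natCast, ← hordβ]
        exact pow_orderOf_eq_one β
      have hβr : β ^ (B * tz) = β ^ r := by
        conv_lhs => rw [← Int.emod_add_mul_ediv (B * tz) (n:ℤ)]
        rw [zpow_add, zpow_mul, hβn1, one_zpow, mul_one]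
        rw [hr, ← zpow_natCast β (((B * tz) % (n:ℤ)).toNat),
          Int.toNat_of_nonneg (Int.emod_nonneg _ hn0)]
      refine ⟨r, ?_⟩
      show hmap ((cycShift F n)^[r] f) ∈ Ksub
      have hiter := hrotIter r f
      have hbr : b ^ r = ((β ^ r : Eˣ) : E) := by rw [hb]; exact (Units.val_pow_eq_pow_val β r).symm
      have hval : hmap f = ((β ^ r : Eˣ) : E) * ((w : Eˣ) : E) := by
        have h1 : hmap f = ((x : Eˣ) : E) := rfl
        rw [h1, hx_eq, hβr, Units.val_mul]
      have heq : hmap ((cycShift F n)^[r] f) = ((w : Eˣ) : E) := by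
        apply mul_right_cancel₀ (pow_ne_zero r hb_ne)
        rw [hiter, hval, hbr, mul_comm]
      rw [heq]
      exact hKmem w hwD
  -- conclusion
  refine ⟨U, hcover, ?_⟩
  rw [Module.finrank_pi, Fintype.card_fin, hfrU]
  have hmkd : m = k * d + k := by rw [hm]; ring
  omega

/-- `hq F n` : the maximum codimension of a cyclically covering subspace of `F^n`. -/
noncomputable def hq (F : Type*) [Field F] [Fintype F] (n : ℕ) : ℕ :=
  sSup {k | ∃ U : Submodule F (Fin n → F), IsCycCovering F n U ∧
    Module.finrank F (Fin n → F) - Module.finrank F U = k}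

/-- With gcd(d+1, q^k − 1) = 1 and n = (q^{k(d+1)} − 1)/(q^k − 1) = Σ_{r=0}^d q^{kr},
h_q(n) = kd. -/
theorem stmt_9 (F : Type*) [Field F] [Fintype F] (k d n : ℕ) (hk : 0 < k) (hd : 0 < d)
    (hgcd : Nat.gcd (d + 1) (Fintype.card F ^ k - 1) = 1)
    (hn : n = ∑ r ∈ Finset.range (d + 1), Fintype.card F ^ (k * r)) :
    hq F n = k * d := by
  classical
  set q := Fintype.card F with hqq
  have hq1 : 1 < q := Fintype.one_lt_card
  have hn_pos : 0 < n := by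
    rw [hn]
    apply Finset.sum_pos
    · intro i _; positivity
    · exact ⟨0, Finset.mem_range.mpr (by omega)⟩
  have hqk2 : 2 ≤ q ^ k := Nat.one_lt_pow (by omega) hq1
  have hnlt : n < q ^ (k * d + 1) := by
    have hgeom : ∀ t : ℕ, (∑ r ∈ Finset.range (t+1), q ^ (k * r)) ≤ 2 * q ^ (k * t) - 1 := by
      intro t
      induction t with
      | zero => simp
      | succ t ih =>
        rw [Finset.sum_range_succ]
        have h1 : 2 * q ^ (k*t) ≤ q ^ (k*(t+1)) := by
          have he : q ^ (k*(t+1)) = q ^ (k*t) * q ^ k := by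
            rw [show k*(t+1) = k*t + k by ring, pow_add]
          calc 2 * q ^ (k*t) = q ^ (k*t) * 2 := by ring
            _ ≤ q ^ (k*t) * q ^ k := Nat.mul_le_mul_left _ hqk2
            _ = q ^ (k*(t+1)) := he.symm
        have h0 : 0 < q ^ (k*t) := by positivity
        omega
    have h2 : 2 * q ^ (k*d) ≤ q ^ (k*d+1) := by
      calc 2 * q ^ (k*d) = q ^ (k*d) * 2 := by ring
        _ ≤ q ^ (k*d) * q := Nat.mul_le_mul_left _ (by omega)
        _ = q ^ (k*d+1) := (pow_succ q (k*d)).symm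
    have h3 := hgeom d
    rw [← hn] at h3
    have h0 : 0 < q ^ (k*d) := by positivity
    omega
  have hbound : ∀ c ∈ {c | ∃ U : Submodule F (Fin n → F), IsCycCovering F n U ∧
      Module.finrank F (Fin n → F) - Module.finrank F U = c}, c ≤ k * d := by
    rintro c ⟨U, hU, rfl⟩
    rw [Module.finrank_pi, Fintype.card_fin]
    have h1 := covering_card_le hn_pos hU
    rw [← hqq] at h1
    by_contra hgt
    push_neg at hgt
    have h2 : q ^ (k*d+1) ≤ q ^ (n - Module.finrank F U) :=
      Nat.pow_le_pow_right (by omega) (by omega)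
    omega
  have hmem : k * d ∈ {c | ∃ U : Submodule F (Fin n → F), IsCycCovering F n U ∧
      Module.finrank F (Fin n → F) - Module.finrank F U = c} :=
    construction k d n hk hd hgcd hn
  unfold hq
  apply le_antisymm
  · exact csSup_le ⟨k * d, hmem⟩ hbound
  · exact le_csSup ⟨k * d, hbound⟩ hmem
end

section
/- Let p be a prime, q a power of p, k a positive integer dividing q − 1, and d ≥ 0. Then h_q(k p^d) = 0; i.e., the only cyclically covering subspace of F_q^{k p^d} is F_q^{k p^d} itself. -/
open Polynomial Module

section Aux

variable {F : Type*} [Field F] {n : ℕ}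

/-- The cyclic shift as a linear map. -/
def shiftL (F : Type*) [Field F] (n : ℕ) : (Fin n → F) →ₗ[F] (Fin n → F) where
  toFun := cycShift F n
  map_add' := fun _ _ => rfl
  map_smul' := fun _ _ => rfl

lemma shiftL_pow_apply (i : ℕ) (x : Fin n → F) (r : Fin n) :
    ((shiftL F n ^ i) x) r = x ⟨(r.1 + i) % n, Nat.mod_lt _ r.pos⟩ := by
  induction i generalizing x with
  | zero => simp [Nat.mod_eq_of_lt r.2]
  | succ i ih =>
      rw [pow_succ, Module.End.mul_apply, ih]
      show x ⟨((r.1 + i) % n + 1) % n, _⟩ = x ⟨(r.1 + (i + 1)) % n, _⟩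
      congr 1
      apply Fin.ext
      show ((r.1 + i) % n + 1) % n = (r.1 + (i + 1)) % n
      rw [Nat.mod_add_mod, Nat.add_assoc]

lemma cycShift_iterate_s18 (r : ℕ) (x : Fin n → F) :
    (cycShift F n)^[r] x = (shiftL F n ^ r) x := by
  induction r with
  | zero => simp
  | succ r ih =>
      rw [Function.iterate_succ_apply', ih, pow_succ', Module.End.mul_apply]
      rfl

lemma shiftL_pow_n (hn : 0 < n) : (shiftL F n) ^ n = 1 := by
  apply LinearMap.ext
  intro x
  funext r
  rw [shiftL_pow_apply]
  show x _ = x r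
  congr 1
  apply Fin.ext
  show (r.1 + n) % n = r.1
  rw [Nat.add_mod_right, Nat.mod_eq_of_lt r.2]

lemma mod_index {n ρ i : ℕ} (hρ : ρ < n) (hi : i < n) :
    (ρ + i) % n = 0 ↔ i = (n - ρ) % n := by
  rcases Nat.eq_zero_or_pos ρ with rfl | hρ0
  · simp [Nat.mod_self, Nat.mod_eq_of_lt hi]
  · have hlt : n - ρ < n := by omega
    rw [Nat.mod_eq_of_lt hlt]
    constructor
    · intro h
      obtain ⟨m, hm⟩ := Nat.dvd_of_mod_eq_zero h
      have hm2 : m = 1 := by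
        rcases m with _ | _ | m
        · omega
        · rfl
        · exfalso; nlinarith [hm]
      subst hm2
      omega
    · intro h
      subst h
      have h2 : ρ + (n - ρ) = n := by omega
      rw [h2, Nat.mod_self]

end Aux

/-- For q a power of the prime p and k ∣ q − 1, h_q(k·p^d) = 0. -/
theorem stmt_18 (p : ℕ) (hp : p.Prime) (F : Type*) [Field F] [Fintype F] [CharP F p]
    (k d : ℕ) (hk : 0 < k) (hkdvd : k ∣ Fintype.card F - 1) :
    hq F (k * p ^ d) = 0 := by
  have : Fact p.Prime := ⟨hp⟩
  set n := k * p ^ d with hndef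
  have hn0 : 0 < n := Nat.mul_pos hk (pow_pos hp.pos d)
  have hcard : 1 < Fintype.card F := Fintype.one_lt_card
  -- Main claim: every cyclically covering subspace is ⊤.
  have key : ∀ U : Submodule F (Fin n → F), IsCycCovering F n U → U = ⊤ := by
    intro U hU
    classical
    by_contra hne
    have hlt : U < ⊤ := lt_top_iff_ne_top.mpr hne
    have : Nontrivial ((Fin n → F) ⧸ U) := Submodule.Quotient.nontrivial_iff.mpr hlt.ne
    obtain ⟨z, hz⟩ := exists_ne (0 : (Fin n → F) ⧸ U)
    obtain ⟨f, hf⟩ : ∃ f : Module.Dual F ((Fin n → F) ⧸ U), f z ≠ 0 := by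
      by_contra hcon
      push_neg at hcon
      exact hz ((Module.forall_dual_apply_eq_zero_iff F z).mp hcon)
    set φ : (Fin n → F) →ₗ[F] F := f ∘ₗ U.mkQ with hφdef
    have hUker : ∀ u ∈ U, φ u = 0 := by
      intro u hu
      simp [hφdef, (Submodule.Quotient.mk_eq_zero U).mpr hu]
    obtain ⟨w, rfl⟩ := U.mkQ_surjective z
    have hφw : φ w ≠ 0 := hf
    set a : Fin n → F := fun i => φ (Pi.single i 1) with hadef
    have hφ_eq : ∀ z : Fin n → F, φ z = ∑ i, z i * a i := by
      intro z
      have hz' : z = ∑ i, z i • (Pi.single i 1 : Fin n → F) := by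
        ext j
        simp [Pi.single_apply]
      conv_lhs => rw [hz']
      rw [map_sum]
      refine Finset.sum_congr rfl fun i _ => ?_
      rw [map_smul, smul_eq_mul]
    set A : F[X] := ∑ i : Fin n, C (a i) * X ^ (i : ℕ) with hAdef
    have hA_coeff : ∀ i : Fin n, A.coeff i = a i := by
      intro i
      rw [hAdef, finset_sum_coeff]
      rw [Finset.sum_eq_single i
        (fun b _ hb => by
          rw [coeff_C_mul, coeff_X_pow, if_neg (fun h' => hb (Fin.val_injective h').symm),
            mul_zero])
        (fun hh => absurd (Finset.mem_univ i) hh)]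
      simp [coeff_C_mul, coeff_X_pow]
    have hAne : A ≠ 0 := by
      intro h0
      apply hφw
      rw [hφ_eq]
      refine Finset.sum_eq_zero fun i _ => ?_
      rw [← hA_coeff i, h0, coeff_zero, mul_zero]
    have hAdeg : A.natDegree < n := by
      have h1 : A.natDegree ≤ n - 1 := by
        rw [hAdef]
        refine natDegree_sum_le_of_forall_le _ _ fun i _ => ?_
        refine le_trans (natDegree_C_mul_le _ _) ?_
        rw [natDegree_X_pow]
        omega
      omega
    set Xn1 : F[X] := X ^ n - 1 with hXdef
    have hXeqC : Xn1 = X ^ n - C 1 := by rw [hXdef, map_one]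
    have hXne : Xn1 ≠ 0 := by rw [hXeqC]; exact X_pow_sub_C_ne_zero hn0 1
    have hXdeg : Xn1.natDegree = n := by rw [hXeqC]; exact natDegree_X_pow_sub_C
    -- Splits
    have hsplitq : Splits (X ^ Fintype.card F - X : F[X]) := by
      rw [splits_iff_card_roots, FiniteField.roots_X_pow_card_sub_X,
        FiniteField.X_pow_card_sub_X_natDegree_eq F hcard]
      simp
    have hdvd1 : (X ^ (Fintype.card F - 1) - 1 : F[X]) ∣ X ^ Fintype.card F - X := by
      refine ⟨X, ?_⟩
      rw [sub_mul, ← pow_succ, Nat.sub_add_cancel (by omega), one_mul]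
    have hsplit1 : Splits (X ^ (Fintype.card F - 1) - 1 : F[X]) :=
      Splits.of_dvd hsplitq (FiniteField.X_pow_card_sub_X_ne_zero F hcard) hdvd1
    have hdvd2 : (X ^ k - 1 : F[X]) ∣ X ^ (Fintype.card F - 1) - 1 := by
      obtain ⟨m, hm⟩ := hkdvd
      rw [hm, pow_mul]
      simpa using sub_dvd_pow_sub_pow (X ^ k : F[X]) 1 m
    have hne1 : (X ^ (Fintype.card F - 1) - 1 : F[X]) ≠ 0 := by
      rw [show ((1 : F[X]) = C 1) from (map_one C).symm]
      exact X_pow_sub_C_ne_zero (by omega) 1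
    have hsplitk : Splits (X ^ k - 1 : F[X]) :=
      Splits.of_dvd hsplit1 hne1 hdvd2
    have hXn1eq : Xn1 = (X ^ k - 1) ^ p ^ d := by
      rw [sub_pow_char_pow, one_pow, ← pow_mul, hXdef]
    have hsplitXn1 : Splits Xn1 := by
      rw [hXn1eq]; exact hsplitk.pow _
    -- gcd and Bezout
    set g : F[X] := EuclideanDomain.gcd A Xn1 with hgdef
    have hg0 : g ≠ 0 := by
      rw [hgdef]
      intro hcon
      exact hAne (EuclideanDomain.gcd_eq_zero_iff.mp hcon).1
    have hgA : g ∣ A := EuclideanDomain.gcd_dvd_left A Xn1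
    have hgX : g ∣ Xn1 := EuclideanDomain.gcd_dvd_right A Xn1
    obtain ⟨q0, hq0⟩ := hgX
    have hq0ne : q0 ≠ 0 := by
      intro hcon; rw [hcon, mul_zero] at hq0; exact hXne hq0
    have hdegg : g.natDegree ≤ A.natDegree := natDegree_le_of_dvd hgA hAne
    have hdegq0 : 0 < q0.natDegree := by
      have h1 : Xn1.natDegree = g.natDegree + q0.natDegree := by
        rw [hq0, natDegree_mul hg0 hq0ne]
      omega
    have hsplitq0 : Splits q0 :=
      Splits.of_dvd hsplitXn1 hXne (Dvd.intro_left g hq0.symm)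
    obtain ⟨ζ, hζroot⟩ := hsplitq0.exists_eval_eq_zero
      ((natDegree_pos_iff_degree_pos.mp hdegq0).ne')
    have hζn : ζ ^ n = 1 := by
      have h1 : eval ζ Xn1 = 0 := by
        rw [hq0, eval_mul, hζroot, mul_zero]
      rw [hXdef, eval_sub, eval_pow, eval_X, eval_one, sub_eq_zero] at h1
      exact h1
    have hζ0 : ζ ≠ 0 := by
      rintro rfl
      rw [zero_pow hn0.ne'] at hζn
      exact zero_ne_one hζn
    set hpoly : F[X] := ∑ i ∈ Finset.range n, X ^ i * C ζ ^ (n - 1 - i) with hpolydef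
    have hmul : hpoly * (X - C ζ) = Xn1 := by
      rw [hpolydef, geom_sum₂_mul, ← C_pow, hζn, map_one, hXdef]
    have hgh : g ∣ hpoly := by
      have hdvd : (X - C ζ) ∣ q0 := dvd_iff_isRoot.mpr hζroot
      obtain ⟨t, ht⟩ := hdvd
      refine ⟨t, mul_right_cancel₀ (X_sub_C_ne_zero ζ) ?_⟩
      rw [hmul, hq0, ht]; ring
    obtain ⟨c, hc⟩ := hgh
    have hbez := EuclideanDomain.gcd_eq_gcd_ab A Xn1
    have hhc : hpoly = A * (EuclideanDomain.gcdA A Xn1 * c)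
        + Xn1 * (EuclideanDomain.gcdB A Xn1 * c) := by
      rw [hc, ← hgdef] at *
      rw [hc]
      calc g * c = (A * EuclideanDomain.gcdA A Xn1 + Xn1 * EuclideanDomain.gcdB A Xn1) * c := by
            rw [← hbez]
        _ = _ := by ring
    -- operator side
    have hSX : aeval (shiftL F n) Xn1 = 0 := by
      rw [hXdef, map_sub, map_pow, aeval_X, map_one, shiftL_pow_n hn0, sub_self]
    have hAfact : aeval (shiftL F n) hpoly
        = aeval (shiftL F n) A * aeval (shiftL F n) (EuclideanDomain.gcdA A Xn1 * c) := by
      rw [hhc]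
      simp only [map_add, map_mul, hSX, zero_mul, add_zero]
    set e : Fin n → F := Pi.single (⟨0, hn0⟩ : Fin n) 1 with hedef
    set x : Fin n → F := (aeval (shiftL F n) (EuclideanDomain.gcdA A Xn1 * c)) e with hxdef
    set y : Fin n → F := (aeval (shiftL F n) A) x with hydef
    have hyh : y = (aeval (shiftL F n) hpoly) e := by
      rw [hydef, hxdef, ← Module.End.mul_apply, ← hAfact]
    -- y has all coordinates nonzero
    have hy : ∀ ρ : Fin n, y ρ ≠ 0 := by
      intro ρ
      rw [hyh, hpolydef]
      have hexp : ((aeval (shiftL F n) (∑ i ∈ Finset.range n, X ^ i * C ζ ^ (n - 1 - i))) e) ρ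
          = ∑ i ∈ Finset.range n,
              ζ ^ (n - 1 - i) * e ⟨(ρ.1 + i) % n, Nat.mod_lt _ ρ.pos⟩ := by
        rw [map_sum, LinearMap.sum_apply, Finset.sum_apply]
        refine Finset.sum_congr rfl fun i _ => ?_
        rw [map_mul, map_pow, map_pow, aeval_X, aeval_C, Module.End.mul_apply, ← map_pow,
          Module.algebraMap_end_apply, map_smul, Pi.smul_apply, smul_eq_mul, shiftL_pow_apply]
      rw [hexp]
      have hi0lt : (n - ρ.1) % n < n := Nat.mod_lt _ hn0
      have hsum : ∑ i ∈ Finset.range n,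
          ζ ^ (n - 1 - i) * e ⟨(ρ.1 + i) % n, Nat.mod_lt _ ρ.pos⟩
          = ζ ^ (n - 1 - (n - ρ.1) % n) := by
        rw [Finset.sum_eq_single ((n - ρ.1) % n)
          (fun i hi hne' => by
            have hilt : i < n := Finset.mem_range.mp hi
            have hne2 : (⟨(ρ.1 + i) % n, Nat.mod_lt _ ρ.pos⟩ : Fin n) ≠ ⟨0, hn0⟩ := by
              intro hcontra
              exact hne' ((mod_index ρ.2 hilt).mp (congrArg Fin.val hcontra))
            rw [hedef, Pi.single_eq_of_ne hne2, mul_zero])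
          (fun hh => absurd (Finset.mem_range.mpr hi0lt) hh)]
        have h0 : (ρ.1 + (n - ρ.1) % n) % n = 0 := (mod_index ρ.2 hi0lt).mpr rfl
        have heq : (⟨(ρ.1 + (n - ρ.1) % n) % n, Nat.mod_lt _ ρ.pos⟩ : Fin n) = ⟨0, hn0⟩ :=
          Fin.ext h0
        rw [heq, hedef, Pi.single_eq_same, mul_one]
      rw [hsum]
      exact pow_ne_zero _ hζ0
    -- contradiction
    obtain ⟨r, hr⟩ := hU x
    have h1 : φ ((cycShift F n)^[r] x) = 0 := hUker _ hr
    rw [cycShift_iterate_s18] at h1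
    have h2 : φ ((shiftL F n ^ r) x) = y ⟨r % n, Nat.mod_lt _ hn0⟩ := by
      rw [hφ_eq, hydef]
      have hexp : ((aeval (shiftL F n) A) x) ⟨r % n, Nat.mod_lt _ hn0⟩
          = ∑ i : Fin n, a i * x ⟨(r % n + i.1) % n, Nat.mod_lt _ hn0⟩ := by
        rw [hAdef, map_sum, LinearMap.sum_apply, Finset.sum_apply]
        refine Finset.sum_congr rfl fun i _ => ?_
        rw [map_mul, aeval_C, map_pow, aeval_X, Module.End.mul_apply,
          Module.algebraMap_end_apply, Pi.smul_apply, smul_eq_mul, shiftL_pow_apply]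
      rw [hexp]
      refine Finset.sum_congr rfl fun i _ => ?_
      rw [shiftL_pow_apply, mul_comm]
      congr 2
      apply Fin.ext
      show (i.1 + r) % n = (r % n + i.1) % n
      rw [Nat.mod_add_mod, Nat.add_comm]
    rw [h2] at h1
    exact hy _ h1
  -- conclude hq = 0
  have hset : {m | ∃ U : Submodule F (Fin n → F), IsCycCovering F n U ∧
      Module.finrank F (Fin n → F) - Module.finrank F U = m} = {0} := by
    ext m
    constructor
    · rintro ⟨U, hUc, hm⟩
      rw [key U hUc] at hm
      simp only [Set.mem_singleton_iff]
      rw [← hm, finrank_top, Nat.sub_self]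
    · rintro rfl
      exact ⟨⊤, fun x => ⟨0, by simp⟩, by rw [finrank_top, Nat.sub_self]⟩
  unfold hq
  rw [hset]
  exact csSup_singleton 0
end
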